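/- Let G = (V, E) be a finite connected simple graph and w : E → ℝ an injective weight function. Suppose T' is a spanning tree of G with the minimax path property: for every pair of vertices x, y ∈ V and every path P' in G from x to y, the maximum of w over the edges of the T'-path from x to y is at most the maximum of w over the edges of P'. Then T' is the minimal spanning tree of (G, w); in particular, T' is the only spanning tree of G with this property. -/

import Mathlib

/-- A spanning tree of a simple graph `G` on `V`: a graph on the same vertex set which is
a subgraph of `G` (i.e. `T ≤ G`), connected and acyclic. -/
def IsSpanningTree {V : Type*} (G T : SimpleGraph V) : Prop :=
  T ≤ G ∧ T.Connected ∧ T.IsAcyclic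

/-- The total weight of (the edges of) a graph `T` with respect to a weight function `w`. -/
noncomputable def treeWeight {V : Type*} [Finite V] (T : SimpleGraph V) (w : Sym2 V → ℝ) : ℝ :=
  ∑ e ∈ T.edgeSet.toFinite.toFinset, w e

/-- `T` has the minimax path property in `(G, w)`: for all vertices `x, y`, for every path
in `T` from `x` to `y` and every path in `G` from `x` to `y`, the maximum weight of an edge
of the `T`-path is at most the maximum weight of an edge of the `G`-path. -/
def HasMinimaxProperty {V : Type*} (G T : SimpleGraph V) (w : Sym2 V → ℝ) : Prop :=
  ∀ (x y : V) (pT : T.Walk x y), pT.IsPath →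
    ∀ pG : G.Walk x y, pG.IsPath →
      (pT.edges.map w).maximum ≤ (pG.edges.map w).maximum

open SimpleGraph

section Aux

variable {V : Type*}

/-- In an acyclic graph, the unique path between adjacent vertices is the single edge. -/
lemma aux_path_edges_of_adj {T : SimpleGraph V} (hT : T.IsAcyclic) {x y : V} (h : T.Adj x y)
    {p : T.Walk x y} (hp : p.IsPath) : p.edges = [s(x, y)] := by
  have h1 := hT.path_unique ⟨p, hp⟩ (Path.singleton h)
  have h2 : p = (Path.singleton h : T.Walk x y) := congrArg Subtype.val h1
  rw [h2]
  simp [Path.singleton]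

/-- After deleting an edge `s(a,b)`, every vertex connected to some vertex reachable
from `a` or `b` is still reachable from `a` or `b`. -/
lemma aux_reach_split {H : SimpleGraph V} {a b : V} {u v : V} (p : H.Walk u v)
    (hu : (H.deleteEdges {s(a, b)}).Reachable a u ∨ (H.deleteEdges {s(a, b)}).Reachable b u) :
    (H.deleteEdges {s(a, b)}).Reachable a v ∨ (H.deleteEdges {s(a, b)}).Reachable b v := by
  induction p with
  | nil => exact hu
  | @cons x y z h q ih =>
    apply ih
    by_cases he : s(x, y) = s(a, b)
    · rw [Sym2.eq_iff] at he
      rcases he with ⟨rfl, rfl⟩ | ⟨rfl, rfl⟩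
      · exact Or.inr (Reachable.refl _)
      · exact Or.inl (Reachable.refl _)
    · have hadj : (H.deleteEdges {s(a, b)}).Adj x y := by
        simp only [deleteEdges_adj, Set.mem_singleton_iff]
        exact ⟨h, he⟩
      exact hu.imp (fun hr => hr.trans hadj.reachable) (fun hr => hr.trans hadj.reachable)

lemma aux_treeWeight_exchange [Fintype V] (w : Sym2 V → ℝ) {T'' : SimpleGraph V} {e f : Sym2 V}
    (hf : f ∈ T''.edgeSet) (he : e ∉ T''.edgeSet) (hed : ¬e.IsDiag) :
    treeWeight (fromEdgeSet ((T''.edgeSet \ {f}) ∪ {e})) w = treeWeight T'' w - w f + w e := by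
  classical
  have hset : (fromEdgeSet ((T''.edgeSet \ {f}) ∪ {e})).edgeSet
      = (T''.edgeSet \ {f}) ∪ {e} := by
    rw [edgeSet_fromEdgeSet]
    ext x
    simp only [Set.mem_diff, Set.mem_union, Set.mem_singleton_iff, Set.mem_setOf_eq]
    constructor
    · rintro ⟨h1, _⟩; exact h1
    · rintro (⟨h1, h2⟩ | rfl)
      · exact ⟨Or.inl ⟨h1, h2⟩, T''.not_isDiag_of_mem_edgeSet h1⟩
      · exact ⟨Or.inr rfl, hed⟩
  have hef : e ≠ f := fun h => he (h ▸ hf)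
  unfold treeWeight
  have hfin : ((fromEdgeSet ((T''.edgeSet \ {f}) ∪ {e})).edgeSet).toFinite.toFinset
      = insert e ((T''.edgeSet.toFinite.toFinset).erase f) := by
    ext x
    simp only [Set.Finite.mem_toFinset, hset, Finset.mem_insert, Finset.mem_erase,
      Set.mem_union, Set.mem_diff, Set.mem_singleton_iff]
    tauto
  rw [hfin, Finset.sum_insert (by
    simp only [Finset.mem_erase, Set.Finite.mem_toFinset]
    tauto)]
  rw [Finset.sum_erase_eq_sub (by simp only [Set.Finite.mem_toFinset]; exact hf)]
  ring

/-- The exchange step. -/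
lemma aux_exchange [Fintype V] {G T' : SimpleGraph V} {w : Sym2 V → ℝ}
    (hw : Set.InjOn w G.edgeSet) (hT' : IsSpanningTree G T')
    (hmm : HasMinimaxProperty G T' w) {T'' : SimpleGraph V} (hT'' : IsSpanningTree G T'')
    {f : Sym2 V} (hf : f ∈ T''.edgeSet \ T'.edgeSet) :
    ∃ T''' : SimpleGraph V, IsSpanningTree G T''' ∧ treeWeight T''' w < treeWeight T'' w ∧
      T'''.edgeSet \ T'.edgeSet = (T''.edgeSet \ T'.edgeSet) \ {f} := by
  classical
  obtain ⟨hfT'', hfT'⟩ := hf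
  induction f using Sym2.ind with
  | _ a b =>
  have hfG : G.Adj a b := hT''.1 hfT''
  -- a path from a to b in T'
  obtain ⟨p, hp⟩ := ((hT'.2.1.preconnected a b).some.toPath : T'.Path a b)
  -- minimax gives: all edges of p are lighter than f
  have hmax : (p.edges.map w).maximum ≤ (w s(a, b) : WithBot ℝ) := by
    have := hmm a b p hp (Path.singleton hfG) (Path.singleton hfG).2
    simpa [Path.singleton, List.maximum_singleton] using this
  -- the set of vertices reachable from a after deleting f from T''
  set S : Set V := {v | (T''.deleteEdges {s(a, b)}).Reachable a v} with hS
  have haS : a ∈ S := Reachable.refl a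
  have hbridge : T''.IsBridge s(a, b) :=
    (isAcyclic_iff_forall_edge_isBridge.mp hT''.2.2) hfT''
  have hbS : b ∉ S := by
    intro hb
    exact (isBridge_iff.mp hbridge) hb
  obtain ⟨d, hd, hd1, hd2⟩ := p.exists_boundary_dart S haS hbS
  set e : Sym2 V := s(d.fst, d.snd) with hedef
  have heT' : e ∈ T'.edgeSet := d.adj
  have heG : e ∈ G.edgeSet := hT'.1 d.adj
  have hfGS : s(a, b) ∈ G.edgeSet := hfG
  have he_mem_p : e ∈ p.edges := by
    unfold e
    have : d.edge ∈ p.edges := List.mem_map_of_mem (f := Dart.edge) hd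
    simpa [Dart.edge] using this
  have hef : e ≠ s(a, b) := fun h => hfT' (h ▸ heT')
  have he_not_T'' : e ∉ T''.edgeSet := by
    intro hmem
    have hadj : (T''.deleteEdges {s(a, b)}).Adj d.fst d.snd := by
      simp only [deleteEdges_adj, Set.mem_singleton_iff]
      exact ⟨hmem, hef⟩
    exact hd2 (hd1.trans hadj.reachable)
  have hwe_lt : w e < w s(a, b) := by
    have h1 : (w e : WithBot ℝ) ≤ (p.edges.map w).maximum :=
      List.le_maximum_of_mem' (List.mem_map_of_mem (f := w) he_mem_p)
    have h2 : (w e : WithBot ℝ) ≤ (w s(a, b) : WithBot ℝ) := h1.trans hmax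
    have hle : w e ≤ w s(a, b) := by exact_mod_cast h2
    exact lt_of_le_of_ne hle (fun h => hef (hw heG hfGS h))
  -- the new tree
  set T''' : SimpleGraph V := fromEdgeSet ((T''.edgeSet \ {s(a, b)}) ∪ {e}) with hT'''def
  have hE''' : T'''.edgeSet = (T''.edgeSet \ {s(a, b)}) ∪ {e} := by
    rw [hT'''def, edgeSet_fromEdgeSet]
    ext x
    simp only [Set.mem_diff, Set.mem_union, Set.mem_singleton_iff, Set.mem_setOf_eq]
    constructor
    · rintro ⟨h1, _⟩; exact h1
    · rintro (⟨h1, h2⟩ | rfl)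
      · exact ⟨Or.inl ⟨h1, h2⟩, T''.not_isDiag_of_mem_edgeSet h1⟩
      · exact ⟨Or.inr rfl, G.not_isDiag_of_mem_edgeSet heG⟩
  have hleG : T''' ≤ G := by
    rw [← edgeSet_subset_edgeSet, hE''']
    rintro x (⟨h1, _⟩ | rfl)
    · exact edgeSet_mono hT''.1 h1
    · exact heG
  have hle1 : T''.deleteEdges {s(a, b)} ≤ T''' := by
    intro v u hadj
    rw [deleteEdges_adj, Set.mem_singleton_iff] at hadj
    rw [hT'''def, fromEdgeSet_adj]
    exact ⟨Or.inl ⟨hadj.1, hadj.2⟩, hadj.1.ne⟩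
  have heAdj : T'''.Adj d.fst d.snd := by
    rw [hT'''def, fromEdgeSet_adj]
    exact ⟨Or.inr rfl, d.adj.ne⟩
  have hreach2 : ∀ v, (T''.deleteEdges {s(a, b)}).Reachable a v ∨
      (T''.deleteEdges {s(a, b)}).Reachable b v := fun v =>
    aux_reach_split (hT''.2.1.preconnected a v).some (Or.inl (Reachable.refl a))
  have hdc' : (T''.deleteEdges {s(a, b)}).Reachable b d.snd := by
    rcases hreach2 d.snd with h | h
    · exact absurd h hd2
    · exact h
  have hab : T'''.Reachable a b :=
    ((hd1.mono hle1).trans heAdj.reachable).trans (hdc'.mono hle1).symm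
  have hreach : ∀ v, T'''.Reachable a v := by
    intro v
    rcases hreach2 v with h | h
    · exact h.mono hle1
    · exact hab.trans (h.mono hle1)
  have hconn : T'''.Connected := (connected_iff_exists_forall_reachable _).mpr ⟨a, hreach⟩
  -- acyclicity
  have hbridge' : T'''.IsBridge e := by
    rw [hedef, isBridge_iff]
    refine fun hr => ?_
    have hle2 : T''' \ fromEdgeSet {s(d.fst, d.snd)} ≤ T''.deleteEdges {s(a, b)} := by
      intro v u hadj
      rw [sdiff_adj] at hadj
      obtain ⟨hadj1, hadj2⟩ := hadj
      have hne : v ≠ u := hadj1.ne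
      have hmem : s(v, u) ∈ (T''.edgeSet \ {s(a, b)}) ∪ {e} := by
        rw [← hE''']; exact hadj1
      have hxe : s(v, u) ≠ e := by
        intro h
        exact hadj2 ((fromEdgeSet_adj _).mpr ⟨Set.mem_singleton_iff.mpr (h.trans hedef), hne⟩)
      rw [deleteEdges_adj, Set.mem_singleton_iff]
      rcases hmem with ⟨h1, h2⟩ | h1
      · exact ⟨h1, h2⟩
      · exact absurd h1 hxe
    exact hd2 (hd1.trans (hr.mono hle2))
  have hacyc : T'''.IsAcyclic := by
    intro u c hc
    have hnot : e ∉ c.edges := by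
      have := (isBridge_iff_forall_cycle_notMem (heAdj : s(d.fst, d.snd) ∈ T'''.edgeSet)).mp (hedef ▸ hbridge')
      exact this c hc
    have hsub : ∀ x ∈ c.edges, x ∈ T''.edgeSet := by
      intro x hx
      have hmem : x ∈ T'''.edgeSet := c.edges_subset_edgeSet hx
      rw [hE'''] at hmem
      rcases hmem with ⟨h1, _⟩ | h1
      · exact h1
      · exact absurd (h1 ▸ hx) hnot
    exact hT''.2.2 _ (hc.transfer hsub)
  refine ⟨T''', ⟨hleG, hconn, hacyc⟩, ?_, ?_⟩
  · rw [hT'''def, aux_treeWeight_exchange w hfT'' he_not_T'' (G.not_isDiag_of_mem_edgeSet heG)]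
    linarith
  · rw [hE''']
    ext x
    simp only [Set.mem_diff, Set.mem_union, Set.mem_singleton_iff]
    constructor
    · rintro ⟨⟨h1, h2⟩ | rfl, h3⟩
      · exact ⟨⟨h1, h3⟩, h2⟩
      · exact absurd heT' h3
    · rintro ⟨⟨h1, h2⟩, h3⟩
      exact ⟨Or.inl ⟨h1, h3⟩, h2⟩

/-- If `T'' ≤ T'` for spanning trees, they are equal. -/
lemma aux_eq_of_le {G T' T'' : SimpleGraph V} (hT' : IsSpanningTree G T')
    (hT'' : IsSpanningTree G T'') (hle : T'' ≤ T') : T'' = T' := by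
  classical
  rw [← edgeSet_inj]
  apply Set.Subset.antisymm (edgeSet_mono hle)
  intro x hx
  induction x using Sym2.ind with
  | _ u v =>
  have hadj : T'.Adj u v := hx
  obtain ⟨p, hp⟩ := ((hT''.2.1.preconnected u v).some.toPath : T''.Path u v)
  have hsub : ∀ x ∈ p.edges, x ∈ T'.edgeSet := fun x hx =>
    edgeSet_mono hle (p.edges_subset_edgeSet hx)
  have hq := aux_path_edges_of_adj hT'.2.2 hadj (hp.transfer hsub)
  rw [Walk.edges_transfer] at hq
  have : s(u, v) ∈ p.edges := by rw [hq]; exact List.mem_singleton_self _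
  exact p.edges_subset_edgeSet this

/-- A spanning tree with the minimax property contains every spanning tree with it. -/
lemma aux_subset {G T' T'' : SimpleGraph V} (hG : G.Connected) {w : Sym2 V → ℝ}
    (hw : Set.InjOn w G.edgeSet) (hT' : IsSpanningTree G T')
    (hmm' : HasMinimaxProperty G T' w) (hT'' : IsSpanningTree G T'')
    (hmm'' : HasMinimaxProperty G T'' w) : T''.edgeSet ⊆ T'.edgeSet := by
  classical
  intro x hx
  induction x using Sym2.ind with
  | _ u v =>
  have hadj : T''.Adj u v := hx
  have hGadj : G.Adj u v := hT''.1 hadj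
  obtain ⟨p, hp⟩ := ((hT'.2.1.preconnected u v).some.toPath : T'.Path u v)
  have h1 : (p.edges.map w).maximum ≤ (w s(u, v) : WithBot ℝ) := by
    have := hmm' u v p hp (Path.singleton hGadj) (Path.singleton hGadj).2
    simpa [Path.singleton, List.maximum_singleton] using this
  have hsub : ∀ x ∈ p.edges, x ∈ G.edgeSet := fun x hx =>
    edgeSet_mono hT'.1 (p.edges_subset_edgeSet hx)
  have h2 : (w s(u, v) : WithBot ℝ) ≤ (p.edges.map w).maximum := by
    have := hmm'' u v (Path.singleton hadj) (Path.singleton hadj).2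
      (p.transfer G hsub) (hp.transfer hsub)
    rw [Walk.edges_transfer] at this
    simpa [Path.singleton, List.maximum_singleton] using this
  have heq : (p.edges.map w).maximum = (w s(u, v) : WithBot ℝ) := le_antisymm h1 h2
  have hmem : w s(u, v) ∈ p.edges.map w := List.maximum_mem heq
  obtain ⟨x, hxp, hxw⟩ := List.mem_map.mp hmem
  have hxG : x ∈ G.edgeSet := hsub x hxp
  have : x = s(u, v) := hw hxG hGadj hxw
  exact this ▸ p.edges_subset_edgeSet hxp

end Aux

/-- A spanning tree with the minimax path property is the minimal spanning tree; in
particular, it is the unique spanning tree with this property. -/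
theorem spanning_tree_with_minimax_property_is_mst {V : Type*} [Fintype V]
    (G : SimpleGraph V) (hG : G.Connected)
    (w : Sym2 V → ℝ) (hw : Set.InjOn w G.edgeSet)
    (T' : SimpleGraph V) (hT' : IsSpanningTree G T')
    (hminimax : HasMinimaxProperty G T' w) :
    (∀ T'' : SimpleGraph V, IsSpanningTree G T'' →
        treeWeight T' w ≤ treeWeight T'' w) ∧
      (∀ T'' : SimpleGraph V, IsSpanningTree G T'' →
        HasMinimaxProperty G T'' w → T'' = T') := by
  classical
  constructor
  · have key : ∀ n : ℕ, ∀ T'' : SimpleGraph V, IsSpanningTree G T'' →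
        (T''.edgeSet \ T'.edgeSet).ncard ≤ n → treeWeight T' w ≤ treeWeight T'' w := by
      intro n
      induction n with
      | zero =>
        intro T'' hT'' hcard
        have hempty : T''.edgeSet \ T'.edgeSet = ∅ :=
          (Set.ncard_eq_zero (Set.toFinite _)).mp (Nat.le_zero.mp hcard)
        have hle : T'' ≤ T' := by
          rw [← edgeSet_subset_edgeSet]
          intro x hx
          by_contra hxx
          exact absurd ⟨hx, hxx⟩ (hempty ▸ Set.notMem_empty x)
        rw [aux_eq_of_le hT' hT'' hle]
      | succ n ih =>
        intro T'' hT'' hcard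
        rcases Set.eq_empty_or_nonempty (T''.edgeSet \ T'.edgeSet) with hempty | ⟨f, hf⟩
        · have hle : T'' ≤ T' := by
            rw [← edgeSet_subset_edgeSet]
            intro x hx
            by_contra hxx
            exact absurd ⟨hx, hxx⟩ (hempty ▸ Set.notMem_empty x)
          rw [aux_eq_of_le hT' hT'' hle]
        · obtain ⟨T''', hT''', hlt, hdiff⟩ := aux_exchange hw hT' hminimax hT'' hf
          have hcard' : (T'''.edgeSet \ T'.edgeSet).ncard ≤ n := by
            rw [hdiff, Set.ncard_diff_singleton_of_mem hf]
            omega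
          exact (ih T''' hT''' hcard').trans hlt.le
    intro T'' hT''
    exact key _ T'' hT'' le_rfl
  · intro T'' hT'' hmm''
    have h1 := aux_subset hG hw hT' hminimax hT'' hmm''
    have h2 := aux_subset hG hw hT'' hmm'' hT' hminimax
    rw [← edgeSet_inj]
    exact Set.Subset.antisymm h1 h2
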